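/- arXiv:math/0612759 — 4 statements merged into one kernel-verified Lean document; each statement's English description precedes it below -/
import Mathlib

section
/- (Proposition 2: odd bodies on a simple Figure-Eight never collide.) Let T > 0, let k be a positive integer, set N = 2k + 1, and let q : ℝ → ℝ² be a continuous T-periodic map satisfying the Simple Figure-Eight assumption: for all t₁, t₂ ∈ [0, T) with t₁ ≠ t₂, if q(t₁) = q(t₂) then t₁ ∈ {0, T/2} and t₂ ∈ {0, T/2}. Define q_i(t) = q(t + (N - i)T/N) for i = 1, …, N. Then for all t ∈ ℝ and all indices 1 ≤ i < j ≤ N, q_i(t) ≠ q_j(t). -/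
/-- Proposition 2: an odd number `N = 2k + 1` of bodies on a simple Figure-Eight
(whose only self-intersection occurs at the times `0` and `T/2`) never collide. -/
theorem odd_bodies_no_collision (T : ℝ) (hT : 0 < T) (k : ℕ) (hk : 0 < k)
    (N : ℕ) (hN : N = 2 * k + 1) (q : ℝ → ℝ × ℝ)
    (hq : Continuous q)
    (hper : ∀ t : ℝ, q (t + T) = q t)
    (hsimple : ∀ t₁ ∈ Set.Ico (0 : ℝ) T, ∀ t₂ ∈ Set.Ico (0 : ℝ) T,
      t₁ ≠ t₂ → q t₁ = q t₂ →
        t₁ ∈ ({0, T / 2} : Set ℝ) ∧ t₂ ∈ ({0, T / 2} : Set ℝ)) :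
    ∀ t : ℝ, ∀ i j : ℕ, 1 ≤ i → i < j → j ≤ N →
      q (t + ((N : ℝ) - (i : ℝ)) * T / (N : ℝ))
        ≠ q (t + ((N : ℝ) - (j : ℝ)) * T / (N : ℝ)) := by
  intro t i j hi hij hjN heq
  have hT0 : T ≠ 0 := ne_of_gt hT
  have hNposR : (0:ℝ) < (N:ℝ) := by
    have : 0 < N := by omega
    exact_mod_cast this
  have hN0 : (N:ℝ) ≠ 0 := ne_of_gt hNposR
  have hperP : Function.Periodic q T := hper
  set s₁ : ℝ := t + ((N : ℝ) - (i : ℝ)) * T / (N : ℝ) with hs₁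
  set s₂ : ℝ := t + ((N : ℝ) - (j : ℝ)) * T / (N : ℝ) with hs₂
  set m₁ : ℤ := ⌊s₁ / T⌋ with hm₁
  set m₂ : ℤ := ⌊s₂ / T⌋ with hm₂
  set u₁ : ℝ := s₁ - (m₁ : ℝ) * T with hu₁
  set u₂ : ℝ := s₂ - (m₂ : ℝ) * T with hu₂
  have hq1 : q u₁ = q s₁ := hperP.sub_int_mul_eq m₁
  have hq2 : q u₂ = q s₂ := hperP.sub_int_mul_eq m₂
  have hmem : ∀ s : ℝ, s - (⌊s / T⌋ : ℝ) * T ∈ Set.Ico (0 : ℝ) T := by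
    intro s
    have h1 : (⌊s / T⌋ : ℝ) ≤ s / T := Int.floor_le _
    have h2 : s / T < (⌊s / T⌋ : ℝ) + 1 := Int.lt_floor_add_one _
    constructor
    · have := (le_div_iff₀ hT).mp h1
      linarith
    · have := (div_lt_iff₀ hT).mp h2
      nlinarith
  have hmem1 : u₁ ∈ Set.Ico (0 : ℝ) T := hmem s₁
  have hmem2 : u₂ ∈ Set.Ico (0 : ℝ) T := hmem s₂
  -- the key arithmetic identity
  have hdiff : s₁ - s₂ = ((j : ℝ) - (i : ℝ)) * T / (N : ℝ) := by
    rw [hs₁, hs₂]; field_simp; ring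
  have hijZ : (0 : ℤ) < (j : ℤ) - (i : ℤ) := by omega
  have hjNZ : (j : ℤ) - (i : ℤ) < (N : ℤ) := by
    have : 1 ≤ i := hi
    have : j ≤ N := hjN
    omega
  have hne : u₁ ≠ u₂ := by
    intro h
    have hreal : ((j : ℝ) - (i : ℝ)) = ((m₁ : ℝ) - (m₂ : ℝ)) * (N : ℝ) := by
      have : s₁ - s₂ = ((m₁ : ℝ) - (m₂ : ℝ)) * T := by
        rw [hu₁, hu₂] at h; linarith
      rw [hdiff] at this
      field_simp at this
      rcases mul_right_cancel₀ hT0 (by rw [this]; ring : ((j:ℝ) - i) * T = ((m₁:ℝ) - m₂) * (N:ℝ) * T) with h'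
      exact h'
    have hintZ : (j : ℤ) - (i : ℤ) = (m₁ - m₂) * (N : ℤ) := by exact_mod_cast hreal
    set d : ℤ := m₁ - m₂ with hd
    rcases le_or_gt d 0 with hd0 | hd0
    · have : d * (N : ℤ) ≤ 0 := mul_nonpos_iff.mpr (Or.inr ⟨hd0, by positivity⟩)
      omega
    · have hd1 : 1 ≤ d := hd0
      have : (N : ℤ) ≤ d * (N : ℤ) := le_mul_of_one_le_left (by positivity) hd1
      omega
  have hqq : q u₁ = q u₂ := by rw [hq1, hq2, heq]
  obtain ⟨h₁, h₂⟩ := hsimple u₁ hmem1 u₂ hmem2 hne hqq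
  -- in every case, u₁ - u₂ = ± T/2
  have hkey : u₁ - u₂ = T / 2 ∨ u₁ - u₂ = -(T / 2) := by
    simp only [Set.mem_insert_iff, Set.mem_singleton_iff] at h₁ h₂
    rcases h₁ with h₁ | h₁ <;> rcases h₂ with h₂ | h₂
    · exact absurd (h₁.trans h₂.symm) hne
    · right; rw [h₁, h₂]; ring
    · left; rw [h₁, h₂]; ring
    · exact absurd (h₁.trans h₂.symm) hne
  -- s₁ - s₂ = u₁ - u₂ + (m₁ - m₂) T
  have hsplit : s₁ - s₂ = (u₁ - u₂) + ((m₁ : ℝ) - (m₂ : ℝ)) * T := by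
    rw [hu₁, hu₂]; ring
  set d : ℤ := m₁ - m₂ with hdd
  have hdR : ((m₁ : ℝ) - (m₂ : ℝ)) = (d : ℝ) := by push_cast [hdd]; ring
  have hNZ : (N : ℤ) = 2 * (k : ℤ) + 1 := by exact_mod_cast hN
  rcases hkey with hk' | hk'
  · have hreal : 2 * ((j : ℝ) - (i : ℝ)) = 2 * ((N : ℝ) * (d : ℝ)) + (N : ℝ) := by
      have h1 : ((j : ℝ) - (i : ℝ)) * T / (N : ℝ) = T / 2 + (d : ℝ) * T := by
        rw [← hdiff, hsplit, hk', hdR]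
      field_simp at h1
      nlinarith [h1]
    have hintZ : 2 * ((j : ℤ) - (i : ℤ)) = 2 * ((N : ℤ) * d) + (N : ℤ) := by exact_mod_cast hreal
    set e : ℤ := (N : ℤ) * d with he
    omega
  · have hreal : 2 * ((j : ℝ) - (i : ℝ)) = 2 * ((N : ℝ) * (d : ℝ)) - (N : ℝ) := by
      have h1 : ((j : ℝ) - (i : ℝ)) * T / (N : ℝ) = -(T / 2) + (d : ℝ) * T := by
        rw [← hdiff, hsplit, hk', hdR]
      field_simp at h1
      nlinarith [h1]
    have hintZ : 2 * ((j : ℤ) - (i : ℤ)) = 2 * ((N : ℤ) * d) - (N : ℤ) := by exact_mod_cast hreal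
    set e : ℤ := (N : ℤ) * d with he
    omega
end

section
/- (Theorem 1: odd bodies on Figure-Eight are collision-free on a dense set of times.) Let T > 0, let N ≥ 3 be an odd integer, and let q : ℝ → ℝ² be a continuous T-periodic map satisfying the generalized simple assumption: for all t₁, t₂ ∈ [0, T) with t₁ ≠ t₂, if q(t₁) = q(t₂) then t₁ ∈ I and t₂ ∈ I, where I = {0} ∪ { (2r₁ - 1)T/(2r₂) : r₁, r₂ positive integers with (2r₁ - 1)/(2r₂) ≤ 1 }. Define q_i(t) = q(t + (N - i)T/N) for i = 1, …, N. Then the set { t ∈ [0, T] : q_i(t) ≠ q_j(t) for all 1 ≤ i < j ≤ N } is dense in [0, T]. -/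
lemma icc_not_countable {a b : ℝ} (h : a < b) : ¬ (Set.Icc a b).Countable := by
  intro hc
  have : Countable (Set.Icc a b) := Set.countable_coe_iff.mpr hc
  have h2 : Cardinal.mk (Set.Icc a b) ≤ Cardinal.aleph0 := Cardinal.mk_le_aleph0
  rw [Cardinal.mk_Icc_real h] at h2
  exact absurd h2 Cardinal.aleph0_lt_continuum.not_ge

/-- Theorem 1: for an odd number `N ≥ 3` of bodies on a Figure-Eight whose
self-intersections all happen at times in the set
`I = {0} ∪ {(2r₁ - 1)T/(2r₂) : r₁, r₂ ∈ ℤ⁺, (2r₁-1)/(2r₂) ≤ 1}`,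
the set of times in `[0, T]` at which no two bodies collide is dense in `[0, T]`. -/
theorem odd_bodies_dense_no_collision (T : ℝ) (hT : 0 < T)
    (N : ℕ) (hN : 3 ≤ N) (hodd : Odd N) (q : ℝ → ℝ × ℝ)
    (hq : Continuous q)
    (hper : ∀ t : ℝ, q (t + T) = q t)
    (I : Set ℝ)
    (hI : I = {0} ∪ {x : ℝ | ∃ r₁ r₂ : ℕ, 0 < r₁ ∧ 0 < r₂ ∧
      (2 * (r₁ : ℝ) - 1) / (2 * (r₂ : ℝ)) ≤ 1 ∧
      x = (2 * (r₁ : ℝ) - 1) * T / (2 * (r₂ : ℝ))})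
    (hsimple : ∀ t₁ ∈ Set.Ico (0 : ℝ) T, ∀ t₂ ∈ Set.Ico (0 : ℝ) T,
      t₁ ≠ t₂ → q t₁ = q t₂ → t₁ ∈ I ∧ t₂ ∈ I) :
    Set.Icc (0 : ℝ) T ⊆
      closure {t : ℝ | t ∈ Set.Icc (0 : ℝ) T ∧
        ∀ i j : ℕ, 1 ≤ i → i < j → j ≤ N →
          q (t + ((N : ℝ) - (i : ℝ)) * T / (N : ℝ))
            ≠ q (t + ((N : ℝ) - (j : ℝ)) * T / (N : ℝ))} := by
  have hperiodic : Function.Periodic q T := hper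
  have hNpos : (0 : ℝ) < (N : ℝ) := by
    have : 0 < N := lt_of_lt_of_le (by norm_num) hN
    exact_mod_cast this
  set a : ℕ → ℝ := fun i => ((N : ℝ) - (i : ℝ)) * T / (N : ℝ) with ha
  -- I is countable
  have hIcount : I.Countable := by
    rw [hI]
    apply Set.Countable.union (Set.countable_singleton 0)
    have : {x : ℝ | ∃ r₁ r₂ : ℕ, 0 < r₁ ∧ 0 < r₂ ∧
        (2 * (r₁ : ℝ) - 1) / (2 * (r₂ : ℝ)) ≤ 1 ∧
        x = (2 * (r₁ : ℝ) - 1) * T / (2 * (r₂ : ℝ))} ⊆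
        Set.range (fun p : ℕ × ℕ => (2 * (p.1 : ℝ) - 1) * T / (2 * (p.2 : ℝ))) := by
      rintro x ⟨r₁, r₂, -, -, -, hx⟩
      exact ⟨(r₁, r₂), hx.symm⟩
    exact (Set.countable_range _).mono this
  -- the set of collision times
  set S : Set ℝ := ⋃ (i : ℕ), ⋃ (k : ℤ), (fun x : ℝ => x - a i + (k : ℝ) * T) '' I
    with hS
  have hScount : S.Countable :=
    Set.countable_iUnion fun i => Set.countable_iUnion fun k => hIcount.image _
  -- any collision time lies in S
  have hcoll : ∀ t : ℝ, ∀ i j : ℕ, 1 ≤ i → i < j → j ≤ N →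
      q (t + a i) = q (t + a j) → t ∈ S := by
    intro t i j hi hij hjN hcol
    set u : ℝ := t + a i - ⌊(t + a i) / T⌋ * T with hu
    set v : ℝ := t + a j - ⌊(t + a j) / T⌋ * T with hv
    have hu0 : u ∈ Set.Ico (0 : ℝ) T :=
      ⟨Int.sub_floor_div_mul_nonneg _ hT, Int.sub_floor_div_mul_lt _ hT⟩
    have hv0 : v ∈ Set.Ico (0 : ℝ) T :=
      ⟨Int.sub_floor_div_mul_nonneg _ hT, Int.sub_floor_div_mul_lt _ hT⟩
    have hqu : q u = q (t + a i) := hperiodic.sub_int_mul_eq _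
    have hqv : q v = q (t + a j) := hperiodic.sub_int_mul_eq _
    have hne : u ≠ v := by
      intro heq
      have hij' : (i : ℝ) < (j : ℝ) := by exact_mod_cast hij
      have hjN' : (j : ℝ) ≤ (N : ℝ) := by exact_mod_cast hjN
      have hi' : (1 : ℝ) ≤ (i : ℝ) := by exact_mod_cast hi
      have hdiff : a i - a j = ((j : ℝ) - (i : ℝ)) * T / (N : ℝ) := by
        simp only [ha]; ring
      have hkey : ((j : ℝ) - (i : ℝ)) * T / (N : ℝ) =
          ((⌊(t + a i) / T⌋ : ℝ) - (⌊(t + a j) / T⌋ : ℝ)) * T := by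
        have := heq
        rw [hu, hv] at this
        linarith [hdiff, this]
      set m : ℤ := ⌊(t + a i) / T⌋ - ⌊(t + a j) / T⌋ with hm
      have hm' : ((j : ℝ) - (i : ℝ)) = (m : ℝ) * (N : ℝ) := by
        have hT' : T ≠ 0 := ne_of_gt hT
        push_cast [hm]
        field_simp at hkey
        nlinarith [hkey]
      have h1 : (0 : ℝ) < (j : ℝ) - (i : ℝ) := by linarith
      have h2 : (j : ℝ) - (i : ℝ) < (N : ℝ) := by linarith
      rcases le_or_gt m 0 with hm0 | hm0
      · have : (m : ℝ) ≤ 0 := by exact_mod_cast hm0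
        nlinarith
      · have : (1 : ℝ) ≤ (m : ℝ) := by exact_mod_cast hm0
        nlinarith
    have hmem : u ∈ I := (hsimple u hu0 v hv0 hne (by rw [hqu, hqv, hcol])).1
    refine Set.mem_iUnion.mpr ⟨i, Set.mem_iUnion.mpr ⟨⌊(t + a i) / T⌋, ⟨u, hmem, ?_⟩⟩⟩
    simp only [hu]; ring
  -- the good set contains Icc \ S
  have hsub : Set.Icc (0 : ℝ) T \ S ⊆ {t : ℝ | t ∈ Set.Icc (0 : ℝ) T ∧
      ∀ i j : ℕ, 1 ≤ i → i < j → j ≤ N →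
        q (t + ((N : ℝ) - (i : ℝ)) * T / (N : ℝ))
          ≠ q (t + ((N : ℝ) - (j : ℝ)) * T / (N : ℝ))} := by
    rintro t ⟨htIcc, htS⟩
    refine ⟨htIcc, fun i j hi hij hjN hcolt => htS ?_⟩
    exact hcoll t i j hi hij hjN hcolt
  refine fun t ht => closure_mono hsub ?_
  rw [Metric.mem_closure_iff]
  intro ε hε
  set c : ℝ := max 0 (t - ε / 2) with hc
  set d : ℝ := min T (t + ε / 2) with hd
  have hcd : c < d := by
    rcases ht with ⟨ht0, htT⟩
    apply max_lt <;> apply lt_min <;> linarith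
  have hnotsub : ¬ Set.Icc c d ⊆ S := fun h => icc_not_countable hcd (hScount.mono h)
  obtain ⟨y, hy, hyS⟩ := Set.not_subset.mp hnotsub
  rcases ht with ⟨ht0, htT⟩
  rcases hy with ⟨hyc, hyd⟩
  refine ⟨y, ⟨⟨le_trans (le_max_left _ _) hyc, le_trans hyd (min_le_left _ _)⟩, hyS⟩, ?_⟩
  have h1 : t - ε / 2 ≤ y := le_trans (le_max_right _ _) hyc
  have h2 : y ≤ t + ε / 2 := le_trans hyd (min_le_right _ _)
  rw [Real.dist_eq, abs_lt]
  constructor <;> linarith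
end

section
/- Let T > 0 and let q = (q^(1), q^(2), q^(3)) : ℝ → ℝ³ be a continuously differentiable T-periodic map satisfying, for all t ∈ ℝ, q^(1)(t) = -q^(1)(t + T/2), q^(2)(t) = -q^(2)(t + T/4), and q^(3)(t) = -q^(3)(t + T/2). Then for every t ∈ ℝ, the Euclidean norm of q(t) satisfies |q(t)| ≤ (√(3T)/4) · (∫₀ᵀ |q̇(s)|² ds)^{1/2}. -/
open intervalIntegral

open MeasureTheory in
/-- Cauchy–Schwarz for interval integrals. -/
lemma cs_bound (f : ℝ → ℝ) (hf : Continuous f) {t b : ℝ} (hle : t ≤ b) :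
    (∫ s in t..b, |f s|) ^ 2 ≤ (b - t) * ∫ s in t..b, f s ^ 2 := by
  set μ : Measure ℝ := volume.restrict (Set.Ioc t b) with hμ
  haveI : Fact (volume (Set.Ioc t b) < ⊤) := ⟨by simp [Real.volume_Ioc]⟩
  have hpq : (2 : ℝ).HolderConjugate 2 := Real.holderConjugate_iff.mpr ⟨by norm_num, by norm_num⟩
  obtain ⟨C, hC⟩ := (isCompact_Icc (a := t) (b := b)).exists_bound_of_continuousOn
    hf.continuousOn
  have hmem : MemLp (fun s => |f s|) (ENNReal.ofReal 2) μ := by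
    refine MemLp.of_bound (hf.abs.aestronglyMeasurable) C ?_
    refine (ae_restrict_iff' measurableSet_Ioc).2 (Filter.Eventually.of_forall ?_)
    intro x hx
    simpa [abs_abs] using hC x (Set.Ioc_subset_Icc_self hx)
  have hmem1 : MemLp (fun _ : ℝ => (1 : ℝ)) (ENNReal.ofReal 2) μ := memLp_const 1
  have hH := integral_mul_le_Lp_mul_Lq_of_nonneg hpq
    (Filter.Eventually.of_forall (fun x => abs_nonneg (f x)))
    (Filter.Eventually.of_forall (fun _ => zero_le_one)) hmem hmem1
  -- rewrite interval integrals as integrals over μ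
  rw [intervalIntegral.integral_of_le hle, intervalIntegral.integral_of_le hle]
  have habs : ∀ x : ℝ, |f x| ^ (2 : ℝ) = f x ^ 2 := by
    intro x
    rw [show ((2 : ℝ)) = ((2 : ℕ) : ℝ) by norm_num, Real.rpow_natCast, sq_abs]
  have h1 : ∫ a, (1 : ℝ) ^ (2 : ℝ) ∂μ = b - t := by
    simp [hμ, Real.volume_Ioc, ENNReal.toReal_ofReal (sub_nonneg.2 hle), hle]
  have hA : (0 : ℝ) ≤ ∫ a, |f a| ∂μ := integral_nonneg fun x => abs_nonneg _
  have hB : (0 : ℝ) ≤ ∫ a, f a ^ 2 ∂μ := integral_nonneg fun x => sq_nonneg _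
  have hH' : ∫ a, |f a| ∂μ ≤ (∫ a, f a ^ 2 ∂μ) ^ ((1 : ℝ)/2) * (b - t) ^ ((1:ℝ)/2) := by
    have := hH
    simp only [mul_one] at this
    calc ∫ a, |f a| ∂μ ≤ (∫ a, |f a| ^ (2:ℝ) ∂μ) ^ ((1:ℝ)/2) * (∫ a, (1:ℝ) ^ (2:ℝ) ∂μ) ^ ((1:ℝ)/2) := this
      _ = (∫ a, f a ^ 2 ∂μ) ^ ((1:ℝ)/2) * (b - t) ^ ((1:ℝ)/2) := by
          rw [h1]; congr 1; congr 1; exact integral_congr_ae (Filter.Eventually.of_forall fun x => habs x)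
  have hbt : (0 : ℝ) ≤ b - t := sub_nonneg.2 hle
  calc (∫ a, |f a| ∂μ) ^ 2 ≤ ((∫ a, f a ^ 2 ∂μ) ^ ((1:ℝ)/2) * (b - t) ^ ((1:ℝ)/2)) ^ 2 := by
        exact pow_le_pow_left₀ hA hH' 2
    _ = (b - t) * ∫ a, f a ^ 2 ∂μ := by
        rw [mul_pow, ← Real.rpow_natCast ((∫ a, f a ^ 2 ∂μ) ^ ((1:ℝ)/2)) 2,
          ← Real.rpow_natCast ((b - t) ^ ((1:ℝ)/2)) 2,
          ← Real.rpow_mul hB, ← Real.rpow_mul hbt]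
        norm_num
        ring

open MeasureTheory in
lemma anti_bound (f : ℝ → ℝ) (hf : ContDiff ℝ 1 f) {a : ℝ} (ha : 0 < a)
    (hanti : ∀ t, f t = -f (t + a)) (t : ℝ) :
    f t ^ 2 ≤ a / 4 * ∫ s in t..(t + a), (deriv f s) ^ 2 := by
  have hdc : Continuous (deriv f) := hf.continuous_deriv le_rfl
  have hfd : Differentiable ℝ f := hf.differentiable one_ne_zero
  have hle : t ≤ t + a := by linarith
  have hftc : ∫ s in t..(t + a), deriv f s = f (t + a) - f t :=
    integral_deriv_eq_sub (fun x _ => hfd x) (hdc.intervalIntegrable _ _)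
  have hval : f (t + a) - f t = -(2 * f t) := by
    have := hanti t; linarith
  have habs : |2 * f t| ≤ ∫ s in t..(t + a), |deriv f s| := by
    calc |2 * f t| = |∫ s in t..(t + a), deriv f s| := by rw [hftc, hval, abs_neg]
      _ ≤ ∫ s in t..(t + a), |deriv f s| := abs_integral_le_integral_abs hle
  have hint_nonneg : (0:ℝ) ≤ ∫ s in t..(t + a), |deriv f s| :=
    intervalIntegral.integral_nonneg hle fun x _ => abs_nonneg _
  have hsq : (2 * f t) ^ 2 ≤ (∫ s in t..(t + a), |deriv f s|) ^ 2 := by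
    rw [← sq_abs (2 * f t)]
    exact pow_le_pow_left₀ (abs_nonneg _) habs 2
  have hcs := cs_bound (deriv f) hdc hle
  have : (2 * f t) ^ 2 ≤ a * ∫ s in t..(t + a), (deriv f s) ^ 2 := by
    calc (2 * f t) ^ 2 ≤ (∫ s in t..(t + a), |deriv f s|) ^ 2 := hsq
      _ ≤ (t + a - t) * ∫ s in t..(t + a), (deriv f s) ^ 2 := hcs
      _ = a * ∫ s in t..(t + a), (deriv f s) ^ 2 := by ring_nf
  nlinarith [this]

/-- Estimate of `|q(t)|` for a `T`-periodic `C¹` loop in `ℝ³` whose first and third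
components are `T/2`-antiperiodic and whose second component is `T/4`-antiperiodic:
`|q(t)| ≤ (√(3T)/4) (∫₀ᵀ |q̇|²)^{1/2}`. -/
theorem norm_bound_symmetry1 (T : ℝ) (hT : 0 < T)
    (q : ℝ → EuclideanSpace ℝ (Fin 3))
    (hq : ContDiff ℝ 1 q)
    (hper : ∀ t : ℝ, q (t + T) = q t)
    (h1 : ∀ t : ℝ, q t 0 = -q (t + T / 2) 0)
    (h2 : ∀ t : ℝ, q t 1 = -q (t + T / 4) 1)
    (h3 : ∀ t : ℝ, q t 2 = -q (t + T / 2) 2) :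
    ∀ t : ℝ, ‖q t‖ ≤ Real.sqrt (3 * T) / 4 *
      Real.sqrt (∫ s in (0 : ℝ)..T, ‖deriv q s‖ ^ 2) := by
  intro t
  -- components are C¹
  have hqd : Differentiable ℝ q := hq.differentiable one_ne_zero
  have hcd : ∀ i : Fin 3, ContDiff ℝ 1 (fun s => q s i) := fun i =>
    (EuclideanSpace.proj i : EuclideanSpace ℝ (Fin 3) →L[ℝ] ℝ).contDiff.comp hq
  have hderiv_comp : ∀ (i : Fin 3) (s : ℝ), deriv (fun u => q u i) s = deriv q s i := by
    intro i s
    exact ((EuclideanSpace.proj i : EuclideanSpace ℝ (Fin 3) →L[ℝ] ℝ).hasFDerivAt.comp_hasDerivAt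
      s (hqd s).hasDerivAt).deriv
  have hdc : Continuous (deriv q) := hq.continuous_deriv le_rfl
  -- derivative is periodic
  have hDper : ∀ s : ℝ, deriv q (s + T) = deriv q s := by
    intro s
    have h : (fun u => q (u + T)) = q := funext hper
    calc deriv q (s + T) = deriv (fun u => q (u + T)) s := (deriv_comp_add_const ..).symm
      _ = deriv q s := by rw [h]
  -- component integrand facts
  have hgc : ∀ i : Fin 3, Continuous (fun s => (deriv q s i) ^ 2) := fun i =>
    (((EuclideanSpace.proj i : EuclideanSpace ℝ (Fin 3) →L[ℝ] ℝ).continuous.comp hdc).pow 2)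
  have hgper : ∀ i : Fin 3, Function.Periodic (fun s => (deriv q s i) ^ 2) T := by
    intro i s; simp [hDper s]
  -- key: for each component with its antiperiod
  have key : ∀ (i : Fin 3) (a : ℝ), 0 < a → a ≤ T → (∀ u, q u i = -q (u + a) i) →
      (q t i) ^ 2 ≤ a / 4 * ∫ s in (0:ℝ)..T, (deriv q s i) ^ 2 := by
    intro i a ha haT hanti
    have h₁ := anti_bound (fun u => q u i) (hcd i) ha hanti t
    have hrw : ∫ s in t..(t + a), (deriv (fun u => q u i) s) ^ 2
        = ∫ s in t..(t + a), (deriv q s i) ^ 2 := by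
      apply intervalIntegral.integral_congr
      intro s _
      simp only [hderiv_comp]
    rw [hrw] at h₁
    have h₂ : ∫ s in t..(t + a), (deriv q s i) ^ 2 ≤ ∫ s in (0:ℝ)..T, (deriv q s i) ^ 2 := by
      have hadj : (∫ s in t..(t + a), (deriv q s i) ^ 2) + ∫ s in (t+a)..(t+T), (deriv q s i) ^ 2
          = ∫ s in t..(t + T), (deriv q s i) ^ 2 :=
        intervalIntegral.integral_add_adjacent_intervals
          ((hgc i).intervalIntegrable _ _) ((hgc i).intervalIntegrable _ _)
      have hnn : (0:ℝ) ≤ ∫ s in (t+a)..(t+T), (deriv q s i) ^ 2 :=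
        intervalIntegral.integral_nonneg (by linarith) (fun x _ => sq_nonneg _)
      have hper' : ∫ s in t..(t + T), (deriv q s i) ^ 2
          = ∫ s in (0:ℝ)..T, (deriv q s i) ^ 2 := by
        simpa using (hgper i).intervalIntegral_add_eq t 0
      linarith
    have ha4 : (0:ℝ) ≤ a / 4 := by linarith
    calc (q t i) ^ 2 ≤ a / 4 * ∫ s in t..(t + a), (deriv q s i) ^ 2 := h₁
      _ ≤ a / 4 * ∫ s in (0:ℝ)..T, (deriv q s i) ^ 2 := by
          exact mul_le_mul_of_nonneg_left h₂ ha4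
  have k0 := key 0 (T/2) (by linarith) (by linarith) h1
  have k1 := key 1 (T/4) (by linarith) (by linarith) h2
  have k2 := key 2 (T/2) (by linarith) (by linarith) h3
  have hI0n : (0:ℝ) ≤ ∫ s in (0:ℝ)..T, (deriv q s 0) ^ 2 :=
    intervalIntegral.integral_nonneg hT.le (fun x _ => sq_nonneg _)
  have hI1n : (0:ℝ) ≤ ∫ s in (0:ℝ)..T, (deriv q s 1) ^ 2 :=
    intervalIntegral.integral_nonneg hT.le (fun x _ => sq_nonneg _)
  have hI2n : (0:ℝ) ≤ ∫ s in (0:ℝ)..T, (deriv q s 2) ^ 2 :=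
    intervalIntegral.integral_nonneg hT.le (fun x _ => sq_nonneg _)
  have hIsum : ∫ s in (0:ℝ)..T, ‖deriv q s‖ ^ 2
      = (∫ s in (0:ℝ)..T, (deriv q s 0) ^ 2) + (∫ s in (0:ℝ)..T, (deriv q s 1) ^ 2)
        + ∫ s in (0:ℝ)..T, (deriv q s 2) ^ 2 := by
    have hnorm : ∀ s : ℝ, ‖deriv q s‖ ^ 2
        = (deriv q s 0) ^ 2 + (deriv q s 1) ^ 2 + (deriv q s 2) ^ 2 := by
      intro s
      rw [EuclideanSpace.norm_eq, Real.sq_sqrt (Finset.sum_nonneg fun i _ => sq_nonneg _)]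
      simp [Fin.sum_univ_three, sq_abs]
    calc ∫ s in (0:ℝ)..T, ‖deriv q s‖ ^ 2
        = ∫ s in (0:ℝ)..T, ((deriv q s 0) ^ 2 + (deriv q s 1) ^ 2 + (deriv q s 2) ^ 2) := by
          apply intervalIntegral.integral_congr; intro s _; exact hnorm s
      _ = _ := by
          rw [intervalIntegral.integral_add (show IntervalIntegrable (fun s => (deriv q s 0) ^ 2 + (deriv q s 1) ^ 2) MeasureTheory.volume 0 T from ((hgc 0).add (hgc 1)).intervalIntegrable _ _)
              ((hgc 2).intervalIntegrable _ _),
            intervalIntegral.integral_add ((hgc 0).intervalIntegrable _ _)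
              ((hgc 1).intervalIntegrable _ _)]
  have hIn : (0:ℝ) ≤ ∫ s in (0:ℝ)..T, ‖deriv q s‖ ^ 2 := by
    rw [hIsum]; linarith
  have hqn : ‖q t‖ ^ 2 = (q t 0) ^ 2 + (q t 1) ^ 2 + (q t 2) ^ 2 := by
    rw [EuclideanSpace.norm_eq, Real.sq_sqrt (Finset.sum_nonneg fun i _ => sq_nonneg _)]
    simp [Fin.sum_univ_three, sq_abs]
  have hmain : ‖q t‖ ^ 2 ≤ 3 * T / 16 * ∫ s in (0:ℝ)..T, ‖deriv q s‖ ^ 2 := by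
    rw [hqn, hIsum]
    nlinarith [k0, k1, k2, hI0n, hI1n, hI2n, hT]
  have h16 : Real.sqrt (3 * T / 16) = Real.sqrt (3 * T) / 4 := by
    rw [Real.sqrt_div (by linarith : (0:ℝ) ≤ 3 * T) 16,
      show (16:ℝ) = 4 ^ 2 by norm_num, Real.sqrt_sq (by norm_num : (0:ℝ) ≤ 4)]
  calc ‖q t‖ = Real.sqrt (‖q t‖ ^ 2) := (Real.sqrt_sq (norm_nonneg _)).symm
    _ ≤ Real.sqrt (3 * T / 16 * ∫ s in (0:ℝ)..T, ‖deriv q s‖ ^ 2) := Real.sqrt_le_sqrt hmain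
    _ = Real.sqrt (3 * T / 16) * Real.sqrt (∫ s in (0:ℝ)..T, ‖deriv q s‖ ^ 2) :=
        Real.sqrt_mul (by linarith) _
    _ = Real.sqrt (3 * T) / 4 * Real.sqrt (∫ s in (0:ℝ)..T, ‖deriv q s‖ ^ 2) := by rw [h16]
end

section
/- (Strong Force condition implies infinite action along collision paths.) Let d ≥ 1, δ > 0, let U : ℝ^d \ {0} → ℝ be continuous with U(ξ) ≤ 0 for all ξ ≠ 0, and suppose there exists a continuously differentiable function V : ℝ^d \ {0} → ℝ such that V(ξ) → +∞ as ξ → 0 and −U(ξ) ≥ |∇V(ξ)|² whenever 0 < |ξ| ≤ δ. Let a < b and let x : [a, b] → ℝ^d be continuous on [a, b], continuously differentiable on [a, b), with x(t) ≠ 0 for all t ∈ [a, b) and x(b) = 0. Then the action integral diverges: for every M > 0 there exists b' ∈ (a, b) such that ∫_a^{b'} ( (1/2)|ẋ(t)|² − U(x(t)) ) dt ≥ M. -/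
open intervalIntegral

/-- Strong Force condition implies infinite action along collision paths: if
`−U(ξ) ≥ |∇V(ξ)|²` near `0` with `V(ξ) → +∞` as `ξ → 0`, and `x` is a path reaching the
singularity `0` at time `b`, then the action `∫ₐᵇ' (|ẋ|²/2 − U(x))` exceeds any `M`. -/
theorem strong_force_infinite_action (d : ℕ) (hd : 1 ≤ d) (δ : ℝ) (hδ : 0 < δ)
    (U : EuclideanSpace ℝ (Fin d) → ℝ)
    (hUcont : ContinuousOn U {(0 : EuclideanSpace ℝ (Fin d))}ᶜ)
    (hU0 : ∀ ξ : EuclideanSpace ℝ (Fin d), ξ ≠ 0 → U ξ ≤ 0)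
    (V : EuclideanSpace ℝ (Fin d) → ℝ)
    (hV : ContDiffOn ℝ 1 V {(0 : EuclideanSpace ℝ (Fin d))}ᶜ)
    (hVinf : Filter.Tendsto V
      (nhdsWithin 0 {(0 : EuclideanSpace ℝ (Fin d))}ᶜ) Filter.atTop)
    (hSF : ∀ ξ : EuclideanSpace ℝ (Fin d), ξ ≠ 0 → ‖ξ‖ ≤ δ →
      ‖gradient V ξ‖ ^ 2 ≤ -U ξ)
    (a b : ℝ) (hab : a < b)
    (x x' : ℝ → EuclideanSpace ℝ (Fin d))
    (hx : ContinuousOn x (Set.Icc a b))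
    (hx' : ContinuousOn x' (Set.Ico a b))
    (hderiv : ∀ t ∈ Set.Ico a b, HasDerivWithinAt x (x' t) (Set.Icc a b) t)
    (hx0 : ∀ t ∈ Set.Ico a b, x t ≠ 0) (hxb : x b = 0) :
    ∀ M > (0 : ℝ), ∃ b' ∈ Set.Ioo a b,
      M ≤ ∫ t in a..b', ((1 / 2) * ‖x' t‖ ^ 2 - U (x t)) := by
  intro M hM
  have hopen : IsOpen ({(0:EuclideanSpace ℝ (Fin d))}ᶜ) := isOpen_compl_singleton
  -- continuity of the gradient on the complement of 0
  have hgradcont : ContinuousOn (fun ξ : EuclideanSpace ℝ (Fin d) => gradient V ξ) {(0:EuclideanSpace ℝ (Fin d))}ᶜ := by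
    have h1 : ContinuousOn (fderiv ℝ V) {(0:EuclideanSpace ℝ (Fin d))}ᶜ :=
      hV.continuousOn_fderiv_of_isOpen hopen le_rfl
    exact (InnerProductSpace.toDual ℝ (EuclideanSpace ℝ (Fin d))).symm.continuous.comp_continuousOn h1
  -- tendsto of x to 0 at b from the left
  have hxb_tendsto : Filter.Tendsto x (nhdsWithin b (Set.Ico a b)) (nhds (0:EuclideanSpace ℝ (Fin d))) := by
    have h := (hx.continuousWithinAt (Set.right_mem_Icc.mpr hab.le))
    rw [ContinuousWithinAt, hxb] at h
    exact h.mono_left (nhdsWithin_mono b Set.Ico_subset_Icc_self)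
  have hne : (nhdsWithin b (Set.Ico a b)).NeBot := by
    rw [← mem_closure_iff_nhdsWithin_neBot, closure_Ico hab.ne]
    exact Set.right_mem_Icc.mpr hab.le
  -- V ∘ x tends to atTop
  have hxmem : ∀ᶠ t in nhdsWithin b (Set.Ico a b), x t ∈ {(0:EuclideanSpace ℝ (Fin d))}ᶜ :=
    eventually_nhdsWithin_of_forall (fun t ht => Set.mem_compl_singleton_iff.mpr (hx0 t ht))
  have hVx : Filter.Tendsto (fun t => V (x t)) (nhdsWithin b (Set.Ico a b)) Filter.atTop :=
    hVinf.comp (tendsto_nhdsWithin_iff.mpr ⟨hxb_tendsto, hxmem⟩)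
  -- smallness eventuality
  have hsmall : ∀ᶠ t in nhdsWithin b (Set.Ico a b), ‖x t‖ ≤ δ := by
    have : ∀ᶠ y in nhds (0:EuclideanSpace ℝ (Fin d)), ‖y‖ ≤ δ := by
      filter_upwards [Metric.closedBall_mem_nhds (0:EuclideanSpace ℝ (Fin d)) hδ] with y hy
      simpa [mem_closedBall_zero_iff] using hy
    exact hxb_tendsto.eventually this
  -- extract t0
  rw [eventually_nhdsWithin_iff, Metric.eventually_nhds_iff] at hsmall
  obtain ⟨ε₁, hε₁, hsm⟩ := hsmall
  set t0 : ℝ := max ((a+b)/2) (b - ε₁/2) with ht0def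
  have hat0 : a < t0 := lt_max_of_lt_left (by linarith)
  have ht0b : t0 < b := max_lt (by linarith) (by linarith)
  have hsmall' : ∀ t ∈ Set.Ico t0 b, ‖x t‖ ≤ δ := by
    intro t ht
    have h1 : dist t b < ε₁ := by
      rw [Real.dist_eq, abs_of_nonpos (by linarith [ht.2])]
      have : b - ε₁/2 ≤ t0 := le_max_right _ _
      linarith [ht.1]
    exact hsm h1 ⟨le_of_lt (lt_of_lt_of_le hat0 ht.1), ht.2⟩
  -- extract b'
  have hev2 : ∀ᶠ t in nhdsWithin b (Set.Ico a b),
      V (x t0) + M / Real.sqrt 2 ≤ V (x t) := hVx.eventually_ge_atTop _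
  rw [eventually_nhdsWithin_iff, Metric.eventually_nhds_iff] at hev2
  obtain ⟨ε₂, hε₂, hbig⟩ := hev2
  set b' : ℝ := max ((t0+b)/2) (b - ε₂/2) with hb'def
  have ht0b' : t0 < b' := lt_max_of_lt_left (by linarith)
  have hb'b : b' < b := max_lt (by linarith) (by linarith)
  have hab' : a < b' := hat0.trans ht0b'
  have hVb' : V (x t0) + M / Real.sqrt 2 ≤ V (x b') := by
    apply hbig
    · rw [Real.dist_eq, abs_of_nonpos (by linarith)]
      have : b - ε₂/2 ≤ b' := le_max_right _ _
      linarith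
    · exact ⟨hab'.le, hb'b⟩
  refine ⟨b', ⟨hab', hb'b⟩, ?_⟩
  -- notation for integrand and derivative of V ∘ x
  set f : ℝ → ℝ := fun t => (1 / 2) * ‖x' t‖ ^ 2 - U (x t) with hfdef
  set g : ℝ → ℝ := fun t => (inner ℝ (gradient V (x t)) (x' t) : ℝ) with hgdef
  have hsub1 : Set.Icc a b' ⊆ Set.Ico a b := fun t ht => ⟨ht.1, lt_of_le_of_lt ht.2 hb'b⟩
  have hsub2 : Set.Icc t0 b' ⊆ Set.Icc a b' := Set.Icc_subset_Icc hat0.le le_rfl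
  -- continuity of f on Icc a b'
  have hfcont : ContinuousOn f (Set.Icc a b') := by
    apply ContinuousOn.sub
    · exact (continuousOn_const.mul (((hx'.mono hsub1).norm).pow 2))
    · exact hUcont.comp (hx.mono (hsub1.trans Set.Ico_subset_Icc_self))
        (fun t ht => hx0 t (hsub1 ht))
  -- continuity of g on Icc t0 b'
  have hgcont : ContinuousOn g (Set.Icc t0 b') := by
    apply ContinuousOn.inner
    · exact hgradcont.comp (hx.mono ((hsub2.trans hsub1).trans Set.Ico_subset_Icc_self))
        (fun t ht => hx0 t (hsub1 (hsub2 ht)))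
    · exact hx'.mono (hsub2.trans hsub1)
  have hIg : IntervalIntegrable g MeasureTheory.volume t0 b' :=
    hgcont.intervalIntegrable_of_Icc ht0b'.le
  have hIf : IntervalIntegrable f MeasureTheory.volume a b' :=
    hfcont.intervalIntegrable_of_Icc hab'.le
  have hIf1 : IntervalIntegrable f MeasureTheory.volume a t0 :=
    (hfcont.mono (Set.Icc_subset_Icc le_rfl ht0b'.le)).intervalIntegrable_of_Icc hat0.le
  have hIf2 : IntervalIntegrable f MeasureTheory.volume t0 b' :=
    (hfcont.mono hsub2).intervalIntegrable_of_Icc ht0b'.le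
  -- derivative of V ∘ x
  have hVxderiv : ∀ t ∈ Set.uIcc t0 b', HasDerivAt (fun s => V (x s)) (g t) t := by
    intro t ht
    rw [Set.uIcc_of_le ht0b'.le] at ht
    have htmem : t ∈ Set.Ioo a b := ⟨hat0.trans_le ht.1, lt_of_le_of_lt ht.2 hb'b⟩
    have hd1 : HasDerivAt x (x' t) t :=
      (hderiv t ⟨htmem.1.le, htmem.2⟩).hasDerivAt (Icc_mem_nhds htmem.1 htmem.2)
    have hxt : x t ∈ ({(0:EuclideanSpace ℝ (Fin d))}ᶜ) := Set.mem_compl_singleton_iff.mpr (hx0 t ⟨htmem.1.le, htmem.2⟩)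
    have hdiff : DifferentiableAt ℝ V (x t) :=
      (hV.differentiableOn one_ne_zero).differentiableAt (hopen.mem_nhds hxt)
    have hd2 : HasFDerivAt V (fderiv ℝ V (x t)) (x t) := hdiff.hasFDerivAt
    have := hd2.comp_hasDerivAt t hd1
    refine this.congr_deriv ?_
    rw [hgdef]
    simp only [gradient, InnerProductSpace.toDual_symm_apply]
  have hFTC : ∫ t in t0..b', g t = V (x b') - V (x t0) :=
    intervalIntegral.integral_eq_sub_of_hasDerivAt hVxderiv hIg
  -- pointwise bound √2 g ≤ f on [t0, b']
  have hpt : ∀ t ∈ Set.Icc t0 b', Real.sqrt 2 * g t ≤ f t := by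
    intro t ht
    have htmem : t ∈ Set.Ico a b := hsub1 (hsub2 ht)
    have hxt : x t ≠ 0 := hx0 t htmem
    have hδt : ‖x t‖ ≤ δ := hsmall' t ⟨ht.1, lt_of_le_of_lt ht.2 hb'b⟩
    have h2 : ‖gradient V (x t)‖ ^ 2 ≤ -U (x t) := hSF _ hxt hδt
    have h1 : g t ≤ ‖gradient V (x t)‖ * ‖x' t‖ := real_inner_le_norm _ _
    have hr : Real.sqrt 2 ^ 2 = 2 := Real.sq_sqrt (by norm_num)
    have hrpos : (0:ℝ) < Real.sqrt 2 := Real.sqrt_pos.mpr (by norm_num)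
    have hG : (0:ℝ) ≤ ‖gradient V (x t)‖ := norm_nonneg _
    have hs : (0:ℝ) ≤ ‖x' t‖ := norm_nonneg _
    rw [hfdef]
    nlinarith [sq_nonneg (‖x' t‖ - Real.sqrt 2 * ‖gradient V (x t)‖)]
  -- integral comparison
  have hIsg : IntervalIntegrable (fun t => Real.sqrt 2 * g t) MeasureTheory.volume t0 b' :=
    hIg.const_mul _
  have hmono : ∫ t in t0..b', Real.sqrt 2 * g t ≤ ∫ t in t0..b', f t :=
    intervalIntegral.integral_mono_on ht0b'.le hIsg hIf2 hpt
  have hval : ∫ t in t0..b', Real.sqrt 2 * g t = Real.sqrt 2 * (V (x b') - V (x t0)) := by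
    rw [intervalIntegral.integral_const_mul, hFTC]
  have hsqrt2pos : (0:ℝ) < Real.sqrt 2 := Real.sqrt_pos.mpr (by norm_num)
  have hMle : M ≤ Real.sqrt 2 * (V (x b') - V (x t0)) := by
    have : M / Real.sqrt 2 ≤ V (x b') - V (x t0) := by linarith
    calc M = Real.sqrt 2 * (M / Real.sqrt 2) := by
            field_simp
      _ ≤ Real.sqrt 2 * (V (x b') - V (x t0)) := by
            exact mul_le_mul_of_nonneg_left this hsqrt2pos.le
  have hnonneg : (0:ℝ) ≤ ∫ t in a..t0, f t := by
    apply intervalIntegral.integral_nonneg hat0.le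
    intro u hu
    have hu' : u ∈ Set.Ico a b := ⟨hu.1, lt_of_le_of_lt hu.2 ht0b⟩
    have := hU0 (x u) (hx0 u hu')
    have h2 : (0:ℝ) ≤ ‖x' u‖ ^ 2 := sq_nonneg _
    simp only [hfdef]
    nlinarith
  have hsplit : (∫ t in a..t0, f t) + ∫ t in t0..b', f t = ∫ t in a..b', f t :=
    intervalIntegral.integral_add_adjacent_intervals hIf1 hIf2
  calc M ≤ Real.sqrt 2 * (V (x b') - V (x t0)) := hMle
    _ = ∫ t in t0..b', Real.sqrt 2 * g t := hval.symm
    _ ≤ ∫ t in t0..b', f t := hmono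
    _ ≤ (∫ t in a..t0, f t) + ∫ t in t0..b', f t := by linarith
    _ = ∫ t in a..b', f t := hsplit
end
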